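/- Let d ≥ 1, let λ = (λ₁,…,λ_d) ∈ 𝔻^d and let j ∈ {1,…,d}. If f ∈ H²(𝔻^d) vanishes on {z ∈ 𝔻^d : z_j = λ_j}, then there exists g ∈ H²(𝔻^d) such that f(z) = (z_j − λ_j) g(z) for all z ∈ 𝔻^d. In other words, the Hardy space H²(𝔻^d) has the division property. -/

import Mathlib

open MeasureTheory Complex Set
open scoped ENNReal Real NNReal

noncomputable section

/-- Normalized arc-length measure on the unit circle, parametrized by `θ ∈ (0, 2π]`. -/
def mT : Measure ℝ :=
  (ENNReal.ofReal (2 * Real.pi))⁻¹ • (volume.restrict (Set.Ioc (0:ℝ) (2 * Real.pi)))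

/-- The open unit polydisc `𝔻^d`. -/
def polydisc (d : ℕ) : Set (Fin d → ℂ) := {z | ∀ i, ‖z i‖ < 1}

/-- The squared Hardy norm `‖f‖²_{H²(𝔻^d)}`, via suprema of means over tori. -/
def H2polyNorm2 (d : ℕ) (f : (Fin d → ℂ) → ℂ) : ℝ≥0∞ :=
  ⨆ r ∈ Set.Ioo (0:ℝ) 1, ∫⁻ θ : Fin d → ℝ,
    ENNReal.ofReal (‖f (fun i => (r:ℂ) * Complex.exp ((θ i : ℂ) * Complex.I))‖ ^ 2)
      ∂(Measure.pi fun _ : Fin d => mT)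

/-- Membership in the Hardy space `H²(𝔻^d)`. -/
def MemH2poly (d : ℕ) (f : (Fin d → ℂ) → ℂ) : Prop :=
  DifferentiableOn ℂ f (polydisc d) ∧ H2polyNorm2 d f < ⊤


section DivisionAux
open Metric intervalIntegral

lemma polydisc_eq_ball (d : ℕ) : polydisc d = Metric.ball (0 : Fin d → ℂ) 1 := by
  ext z
  simp only [polydisc, mem_setOf_eq, mem_ball_zero_iff]
  rw [pi_norm_lt_iff one_pos]

lemma isOpen_polydisc (d : ℕ) : IsOpen (polydisc d) := by
  rw [polydisc_eq_ball]; exact isOpen_ball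

lemma mem_closedBallPi {d : ℕ} {s : ℝ} (hs : 0 ≤ s) {z : Fin d → ℂ} :
    z ∈ Metric.closedBall (0 : Fin d → ℂ) s ↔ ∀ i, ‖(z i)‖ ≤ s := by
  simp only [mem_closedBall_zero_iff]
  rw [pi_norm_le_iff_of_nonneg hs]

lemma closedBallPi_subset_polydisc {d : ℕ} {s : ℝ} (hs : 0 ≤ s) (hs1 : s < 1) :
    Metric.closedBall (0 : Fin d → ℂ) s ⊆ polydisc d := fun z hz i =>
  lt_of_le_of_lt ((mem_closedBallPi hs).1 hz i) hs1

lemma update_mem_closedBallPi {d : ℕ} {s : ℝ} (hs : 0 ≤ s) {z : Fin d → ℂ} {j : Fin d} {w : ℂ}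
    (hz : z ∈ Metric.closedBall (0 : Fin d → ℂ) s) (hw : ‖w‖ ≤ s) :
    Function.update z j w ∈ Metric.closedBall (0 : Fin d → ℂ) s := by
  rw [mem_closedBallPi hs] at hz ⊢
  intro i
  rcases eq_or_ne i j with rfl | h
  · simpa using hw
  · simpa [Function.update_apply, h] using hz i

lemma update_mem_polydisc {d : ℕ} {z : Fin d → ℂ} {j : Fin d} {w : ℂ}
    (hz : z ∈ polydisc d) (hw : ‖w‖ < 1) :
    Function.update z j w ∈ polydisc d := by
  intro i
  rcases eq_or_ne i j with rfl | h
  · simpa using hw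
  · simpa [Function.update_apply, h] using hz i

lemma continuous_updateFn {d : ℕ} (z : Fin d → ℂ) (j : Fin d) {γ : ℝ → ℂ} (hγ : Continuous γ) :
    Continuous (fun θ => Function.update z j (γ θ)) := by
  apply continuous_pi
  intro i
  rcases eq_or_ne i j with rfl | h
  · simpa [Function.update_apply] using hγ
  · simp only [Function.update_apply, h, if_neg h]
    exact continuous_const

/-- The continuous linear map `z ↦ Function.update z j 0`. -/
def updCLM (d : ℕ) (j : Fin d) : (Fin d → ℂ) →L[ℂ] (Fin d → ℂ) :=
  ContinuousLinearMap.pi (fun i => if i = j then 0 else ContinuousLinearMap.proj i)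

lemma updCLM_apply {d : ℕ} (j : Fin d) (z : Fin d → ℂ) :
    updCLM d j z = Function.update z j 0 := by
  ext i
  rcases eq_or_ne i j with rfl | h
  · simp [updCLM]
  · simp [updCLM, h, Function.update_apply]

lemma update_eq_updCLM {d : ℕ} (j : Fin d) (w : ℂ) (z : Fin d → ℂ) :
    Function.update z j w = updCLM d j z + Function.update (0 : Fin d → ℂ) j w := by
  ext i
  rcases eq_or_ne i j with rfl | h
  · simp [updCLM_apply]
  · simp [updCLM_apply, Function.update_apply, h]

lemma hasFDerivAt_update_left {d : ℕ} (j : Fin d) (w : ℂ) (a : Fin d → ℂ) :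
    HasFDerivAt (fun z : Fin d → ℂ => Function.update z j w) (updCLM d j) a := by
  have : (fun z : Fin d → ℂ => Function.update z j w)
      = fun z => updCLM d j z + Function.update (0 : Fin d → ℂ) j w := by
    funext z; exact update_eq_updCLM j w z
  rw [this]
  exact ((updCLM d j).hasFDerivAt).add_const _

lemma differentiable_update_val {d : ℕ} (z : Fin d → ℂ) (j : Fin d) :
    Differentiable ℂ (fun w : ℂ => Function.update z j w) := by
  rw [differentiable_pi]
  intro i
  rcases eq_or_ne i j with rfl | h
  · simpa [Function.update_apply] using differentiable_id
  · simp only [Function.update_apply, if_neg h]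
    exact differentiable_const _

lemma norm_update_sub_update {d : ℕ} (j : Fin d) (w : ℂ) (x y : Fin d → ℂ) :
    ‖Function.update x j w - Function.update y j w‖ ≤ ‖x - y‖ := by
  rw [pi_norm_le_iff_of_nonneg (norm_nonneg _)]
  intro i
  rcases eq_or_ne i j with rfl | h
  · simp
  · simp only [Pi.sub_apply, Function.update_apply, if_neg h]
    exact norm_le_pi_norm (x - y) i


-- one-variable slice Lipschitz estimate
lemma slice_lip {d : ℕ} {f : (Fin d → ℂ) → ℂ} (hf : DifferentiableOn ℂ f (polydisc d))
    {s δ M : ℝ} (hs : 0 ≤ s) (hδ : 0 < δ) (hsδ : s + δ < 1)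
    (hM : ∀ z ∈ Metric.closedBall (0 : Fin d → ℂ) (s + δ), ‖f z‖ ≤ M)
    (u : Fin d → ℂ) (hu : u ∈ Metric.closedBall (0 : Fin d → ℂ) s)
    (k : Fin d) {a b : ℂ} (ha : ‖a‖ ≤ s) (hb : ‖b‖ ≤ s) :
    ‖f (Function.update u k a) - f (Function.update u k b)‖ ≤ (M / δ) * ‖a - b‖ := by
  set φ : ℂ → ℂ := fun w => f (Function.update u k w) with hφ
  have hsδ0 : 0 ≤ s + δ := by positivity
  -- differentiability of φ at points of abs ≤ s + δ
  have hdiff : ∀ x : ℂ, ‖x‖ ≤ s + δ → DifferentiableAt ℂ φ x := by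
    intro x hx
    have hmem : Function.update u k x ∈ polydisc d := by
      apply closedBallPi_subset_polydisc hsδ0 hsδ
      exact update_mem_closedBallPi hsδ0 (closedBall_subset_closedBall (by linarith) hu) hx
    have h1 : DifferentiableAt ℂ f (Function.update u k x) :=
      (hf.differentiableAt ((isOpen_polydisc d).mem_nhds hmem))
    exact h1.comp x ((differentiable_update_val u k) x)
  -- derivative bound on closedBall 0 s
  have hderiv : ∀ x ∈ Metric.closedBall (0:ℂ) s, ‖deriv φ x‖ ≤ M / δ := by
    intro x hx
    rw [mem_closedBall_zero_iff] at hx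
    apply Complex.norm_deriv_le_of_forall_mem_sphere_norm_le hδ
    · apply DifferentiableOn.diffContOnCl
      intro w hw
      have hw' : ‖w‖ ≤ s + δ := by
        have := mem_closedBall_iff_norm.1 (closure_ball_subset_closedBall hw)
        calc ‖w‖ = ‖(w - x) + x‖ := by rw [sub_add_cancel]
        _ ≤ ‖w - x‖ + ‖x‖ := norm_add_le _ _
        _ ≤ δ + s := by gcongr
        _ = s + δ := by ring
      exact (hdiff w hw').differentiableWithinAt
    · intro w hw
      rw [mem_sphere_iff_norm] at hw
      have hw' : ‖w‖ ≤ s + δ := by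
        calc ‖w‖ = ‖(w - x) + x‖ := by rw [sub_add_cancel]
        _ ≤ ‖w - x‖ + ‖x‖ := norm_add_le _ _
        _ ≤ δ + s := by rw [hw]; gcongr
        _ = s + δ := by ring
      apply hM
      exact update_mem_closedBallPi hsδ0 (closedBall_subset_closedBall (by linarith) hu) hw'
  -- mean value inequality on the convex closed ball
  have := (convex_closedBall (0:ℂ) s).norm_image_sub_le_of_norm_deriv_le
    (fun x hx => hdiff x (le_trans (mem_closedBall_zero_iff.1 hx) (by linarith)))
    hderiv (mem_closedBall_zero_iff.2 hb) (mem_closedBall_zero_iff.2 ha)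
  simpa using this

lemma telescoping_lip {d : ℕ} {f : (Fin d → ℂ) → ℂ} (hf : DifferentiableOn ℂ f (polydisc d))
    {s δ M : ℝ} (hs : 0 ≤ s) (hδ : 0 < δ) (hsδ : s + δ < 1)
    (hM : ∀ z ∈ Metric.closedBall (0 : Fin d → ℂ) (s + δ), ‖f z‖ ≤ M)
    {z z' : Fin d → ℂ} (hz : z ∈ Metric.closedBall (0 : Fin d → ℂ) s)
    (hz' : z' ∈ Metric.closedBall (0 : Fin d → ℂ) s) :
    ‖f z - f z'‖ ≤ (d * (M / δ)) * ‖z - z'‖ := by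
  have hM0 : 0 ≤ M := le_trans (norm_nonneg _) (hM 0 (by simp [mem_closedBall_zero_iff]; positivity))
  set F : ℕ → (Fin d → ℂ) := fun n => fun i => if (i : ℕ) < n then z' i else z i with hF
  have hF0 : F 0 = z := by funext i; simp [hF]
  have hFd : F d = z' := by funext i; simp [hF, i.isLt]
  have hFmem : ∀ n, F n ∈ Metric.closedBall (0 : Fin d → ℂ) s := by
    intro n
    rw [mem_closedBallPi hs]
    intro i
    by_cases h : (i : ℕ) < n
    · simpa [hF, h] using (mem_closedBallPi hs).1 hz' i
    · simpa [hF, h] using (mem_closedBallPi hs).1 hz i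
  have key : ∀ n < d, ‖f (F n) - f (F (n+1))‖ ≤ (M / δ) * ‖z - z'‖ := by
    intro n hn
    set k : Fin d := ⟨n, hn⟩ with hk
    have e1 : F n = Function.update (F (n+1)) k (z k) := by
      funext i
      rcases eq_or_ne i k with rfl | h
      · simp [hF, hk]
      · have hik : (i : ℕ) ≠ n := by
          intro hcontra; exact h (Fin.ext hcontra)
        have : ((i:ℕ) ≤ n) ↔ ((i:ℕ) < n) := by omega
        simp [hF, Function.update_apply, h, this]
    have e2 : F (n+1) = Function.update (F (n+1)) k (z' k) := by
      funext i
      rcases eq_or_ne i k with rfl | h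
      · simp [hF, hk]
      · simp [Function.update_apply, h]
    have hzk : ‖(z k)‖ ≤ s := (mem_closedBallPi hs).1 hz k
    have hzk' : ‖(z' k)‖ ≤ s := (mem_closedBallPi hs).1 hz' k
    calc ‖f (F n) - f (F (n+1))‖
        = ‖f (Function.update (F (n+1)) k (z k)) - f (Function.update (F (n+1)) k (z' k))‖ := by
          rw [← e1, ← e2]
      _ ≤ (M / δ) * ‖z k - z' k‖ := slice_lip hf hs hδ hsδ hM _ (hFmem (n+1)) k hzk hzk'
      _ ≤ (M / δ) * ‖z - z'‖ :=
          mul_le_mul_of_nonneg_left (norm_le_pi_norm (z - z') k) (by positivity)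
  calc ‖f z - f z'‖ = ‖∑ n ∈ Finset.range d, (f (F n) - f (F (n+1)))‖ := by
        rw [Finset.sum_range_sub']
        rw [hF0, hFd]
    _ ≤ ∑ n ∈ Finset.range d, ‖f (F n) - f (F (n+1))‖ := norm_sum_le _ _
    _ ≤ ∑ n ∈ Finset.range d, (M / δ) * ‖z - z'‖ := by
        apply Finset.sum_le_sum
        intro n hn
        exact key n (Finset.mem_range.1 hn)
    _ = (d * (M / δ)) * ‖z - z'‖ := by
        rw [Finset.sum_const, Finset.card_range]
        simp [mul_assoc]


lemma diffAt_core {d : ℕ} (j : Fin d) {f : (Fin d → ℂ) → ℂ}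
    (hf : DifferentiableOn ℂ f (polydisc d)) {c : ℂ}
    (hvan : ∀ z ∈ polydisc d, z j = c → f z = 0)
    {a : Fin d → ℂ} (ha : a ∈ polydisc d) (hc : a j = c) :
    DifferentiableAt ℂ (fun z => dslope (fun w => f (Function.update z j w)) c (z j)) a := by
  classical
  have hna : ‖a‖ < 1 := by
    rw [pi_norm_lt_iff one_pos]
    intro i; simpa using ha i
  set ρ : ℝ := (1 - ‖a‖) / 4 with hρdef
  have hρ : 0 < ρ := by simp only [hρdef]; linarith
  set ε : ℝ := ρ / 2 with hεdef
  have hε : 0 < ε := by positivity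
  set s : ℝ := ‖a‖ + ρ with hsdef
  have hs0 : 0 ≤ s := by positivity
  have hsδ : s + ρ < 1 := by simp only [hsdef, hρdef]; linarith [norm_nonneg a]
  have habsc : ‖c‖ ≤ ‖a‖ := by
    rw [← hc]; exact norm_le_pi_norm a j
  -- bound for f on the closed polydisc of radius s + ρ
  obtain ⟨M, hM⟩ : ∃ M, ∀ z ∈ Metric.closedBall (0 : Fin d → ℂ) (s + ρ), ‖f z‖ ≤ M :=
    (isCompact_closedBall _ _).exists_bound_of_continuousOn
      (hf.continuousOn.mono (closedBallPi_subset_polydisc (by positivity) hsδ))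
  have hM0 : 0 ≤ M := le_trans (norm_nonneg _)
    (hM 0 (mem_closedBall_self (by positivity)))
  -- basic facts about the circle
  have habsw : ∀ θ : ℝ, ‖(circleMap c ρ θ - c)‖ = ρ := by
    intro θ
    rw [circleMap_sub_center]
    simpa using norm_circleMap_zero ρ θ |>.trans (abs_of_pos hρ)
  have hwne : ∀ θ : ℝ, circleMap c ρ θ - c ≠ 0 := by
    intro θ; rw [← norm_ne_zero_iff, habsw]; exact hρ.ne'
  have habsw1 : ∀ θ : ℝ, ‖(circleMap c ρ θ)‖ ≤ s := by
    intro θ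
    calc ‖(circleMap c ρ θ)‖ = ‖(c + (circleMap c ρ θ - c))‖ := by ring_nf
      _ ≤ ‖c‖ + ‖(circleMap c ρ θ - c)‖ := norm_add_le _ _
      _ ≤ ‖a‖ + ρ := by rw [habsw]; gcongr
  -- facts about points in the ball around a
  have hball : ∀ x ∈ ball a ε, x ∈ Metric.closedBall (0 : Fin d → ℂ) s ∧
      ‖(x j - c)‖ < ρ / 2 := by
    intro x hx
    rw [mem_ball, dist_eq_norm] at hx
    constructor
    · rw [mem_closedBallPi hs0]
      intro i
      calc ‖(x i)‖ = ‖a i + (x - a) i‖ := by simp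
        _ ≤ ‖a i‖ + ‖(x - a) i‖ := norm_add_le _ _
        _ ≤ ‖a‖ + ‖x - a‖ := by gcongr <;> exact norm_le_pi_norm _ i
        _ ≤ ‖a‖ + ρ := by have := hx.le; simp only [hεdef] at this; linarith
    · calc ‖(x j - c)‖ = ‖(x - a) j‖ := by rw [← hc]; simp
        _ ≤ ‖x - a‖ := norm_le_pi_norm _ j
        _ < ρ / 2 := by simpa [hεdef] using hx
  have hx_poly : ∀ x ∈ ball a ε, x ∈ polydisc d := fun x hx =>
    closedBallPi_subset_polydisc hs0 (by linarith) (hball x hx).1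
  have hwx : ∀ x ∈ ball a ε, ∀ θ : ℝ, ρ / 2 ≤ ‖(circleMap c ρ θ - x j)‖ := by
    intro x hx θ
    have h1 := (hball x hx).2
    calc ρ / 2 = ρ - ρ / 2 := by ring
      _ ≤ ‖(circleMap c ρ θ - c)‖ - ‖(x j - c)‖ := by
          rw [habsw]; linarith
      _ ≤ ‖((circleMap c ρ θ - c) - (x j - c))‖ := by
          have h2 := norm_sub_norm_le (circleMap c ρ θ - c) (x j - c)
          simpa using h2
      _ = ‖(circleMap c ρ θ - x j)‖ := by ring_nf
  have hwxne : ∀ x ∈ ball a ε, ∀ θ : ℝ, circleMap c ρ θ - x j ≠ 0 := by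
    intro x hx θ
    rw [← norm_ne_zero_iff]
    exact ne_of_gt (lt_of_lt_of_le (half_pos hρ) (hwx x hx θ))
  have hupd_mem : ∀ x ∈ ball a ε, ∀ θ : ℝ,
      Function.update x j (circleMap c ρ θ) ∈ Metric.closedBall (0 : Fin d → ℂ) s := by
    intro x hx θ
    exact update_mem_closedBallPi hs0 (hball x hx).1 (habsw1 θ)
  -- the interval-integral representation
  set Fint : (Fin d → ℂ) → ℝ → ℂ := fun x θ =>
    circleMap 0 ρ θ * Complex.I *
      ((circleMap c ρ θ - x j)⁻¹ * ((circleMap c ρ θ - c)⁻¹ *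
        f (Function.update x j (circleMap c ρ θ)))) with hFint
  have key : ∀ x ∈ ball a ε,
      dslope (fun u => f (Function.update x j u)) c (x j)
        = (2 * Real.pi * Complex.I : ℂ)⁻¹ * ∫ θ in (0:ℝ)..2 * Real.pi, Fint x θ := by
    intro x hx
    set F : ℂ → ℂ := fun u => f (Function.update x j u) with hF
    have hF0 : F c = 0 :=
      hvan _ (update_mem_polydisc (hx_poly x hx) (lt_of_le_of_lt habsc hna))
        (Function.update_self _ _ _)
    have hcball : c ∈ ball (0:ℂ) 1 := by
      rw [mem_ball_zero_iff]
      exact lt_of_le_of_lt habsc hna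
    have hFdiff : DifferentiableOn ℂ F (ball (0:ℂ) 1) := by
      intro u hu
      have hmem : Function.update x j u ∈ polydisc d :=
        update_mem_polydisc (hx_poly x hx)
          (by simpa using mem_ball_zero_iff.1 hu)
      exact ((hf.differentiableAt ((isOpen_polydisc d).mem_nhds hmem)).comp u
        ((differentiable_update_val x j) u)).differentiableWithinAt
    have hGdiff : DifferentiableOn ℂ (dslope F c) (ball (0:ℂ) 1) := by
      rw [differentiableOn_dslope (isOpen_ball.mem_nhds hcball)]
      exact hFdiff
    have hsub : Metric.closedBall c ρ ⊆ ball (0:ℂ) 1 := by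
      intro u hu
      rw [mem_closedBall, dist_eq_norm] at hu
      rw [mem_ball_zero_iff]
      have habsc' : ‖c‖ ≤ ‖a‖ := habsc
      calc ‖u‖ = ‖c + (u - c)‖ := by ring_nf
        _ ≤ ‖c‖ + ‖u - c‖ := norm_add_le _ _
        _ ≤ ‖a‖ + ρ := add_le_add habsc' hu
        _ < 1 := by simp only [hsdef] at hsδ; linarith
    have hxj : x j ∈ ball c ρ := by
      rw [mem_ball, dist_eq_norm]
      have h1 := (hball x hx).2
      calc ‖x j - c‖ = ‖(x j - c)‖ := rfl
        _ < ρ / 2 := h1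
        _ < ρ := by linarith
    have hcau := DifferentiableOn.circleIntegral_sub_inv_smul (hGdiff.mono hsub) hxj
    have hEq : ∀ θ : ℝ, deriv (circleMap c ρ) θ • ((circleMap c ρ θ - x j)⁻¹ •
          dslope F c (circleMap c ρ θ)) = Fint x θ := by
      intro θ
      have hne : circleMap c ρ θ ≠ c := circleMap_ne_center hρ.ne'
      rw [deriv_circleMap, dslope_of_ne _ hne, slope_def_field, hF0]
      simp only [hFint, smul_eq_mul, sub_zero]
      field_simp
      rfl
    calc dslope F c (x j)
        = (2 * Real.pi * Complex.I : ℂ)⁻¹ * ((2 * Real.pi * Complex.I : ℂ) • dslope F c (x j)) := by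
          rw [smul_eq_mul, ← mul_assoc, inv_mul_cancel₀ Complex.two_pi_I_ne_zero, one_mul]
      _ = (2 * Real.pi * Complex.I : ℂ)⁻¹ * ∫ θ in (0:ℝ)..2 * Real.pi, Fint x θ := by
          rw [← hcau, circleIntegral]
          congr 1
          apply intervalIntegral.integral_congr
          intro θ _
          exact hEq θ
  -- derivative candidate
  set B : ℝ → (Fin d → ℂ) →L[ℂ] ℂ := fun θ =>
    ((fderiv ℂ f (Function.update a j (circleMap c ρ θ))).comp (updCLM d j)) with hB
  set pr : (Fin d → ℂ) →L[ℂ] ℂ := ContinuousLinearMap.proj j with hpr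
  set F' : ℝ → (Fin d → ℂ) →L[ℂ] ℂ := fun θ =>
    (circleMap 0 ρ θ * Complex.I * ((circleMap c ρ θ - a j)⁻¹ * (circleMap c ρ θ - c)⁻¹)) • B θ
    + (circleMap 0 ρ θ * Complex.I * (((circleMap c ρ θ - a j)^2)⁻¹ *
        ((circleMap c ρ θ - c)⁻¹ * f (Function.update a j (circleMap c ρ θ))))) • pr with hF'
  have haball : a ∈ ball a ε := mem_ball_self hε
  -- continuity facts
  have hcont_f : ∀ x ∈ ball a ε, Continuous (fun θ => f (Function.update x j (circleMap c ρ θ))) := by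
    intro x hx
    apply (hf.continuousOn).comp_continuous (continuous_updateFn x j (continuous_circleMap c ρ))
    intro θ
    exact closedBallPi_subset_polydisc hs0 (by linarith) (hupd_mem x hx θ)
  have hcont_Fint : ∀ x ∈ ball a ε, Continuous (fun θ => Fint x θ) := by
    intro x hx
    apply Continuous.mul
    · exact (continuous_circleMap 0 ρ).mul continuous_const
    apply Continuous.mul
    · exact Continuous.inv₀ ((continuous_circleMap c ρ).sub continuous_const)
        (fun θ => hwxne x hx θ)
    apply Continuous.mul
    · exact Continuous.inv₀ ((continuous_circleMap c ρ).sub continuous_const)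
        (fun θ => hwne θ)
    · exact hcont_f x hx
  -- Lipschitz estimate
  set K₀ : ℝ := (2/ρ) * ((d:ℝ) * (M/ρ)) + (2/ρ)^2 * M with hK₀
  have hK₀0 : 0 ≤ K₀ := by positivity
  have h_lip_all : ∀ θ : ℝ, ∀ x ∈ ball a ε, ∀ y ∈ ball a ε,
      dist (Fint x θ) (Fint y θ) ≤ K₀ * dist x y := by
    intro θ x hx y hy
    set W := circleMap c ρ θ with hW
    set qx := (W - x j)⁻¹ with hqxd
    set qy := (W - y j)⁻¹ with hqyd
    set px := f (Function.update x j W) with hpxd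
    set py := f (Function.update y j W) with hpyd
    have hinvbd : ∀ u : ℂ, ρ/2 ≤ ‖(W - u)‖ → ‖(W - u)⁻¹‖ ≤ 2/ρ := by
      intro u hu
      rw [norm_inv]
      have h2 : (‖(W - u)‖)⁻¹ ≤ (ρ/2)⁻¹ :=
        inv_anti₀ (half_pos hρ) hu
      calc (‖(W - u)‖)⁻¹ ≤ (ρ/2)⁻¹ := h2
        _ = 2/ρ := by field_simp
    have hqxbd : ‖qx‖ ≤ 2/ρ := hinvbd _ (hwx x hx θ)
    have hqybd : ‖qy‖ ≤ 2/ρ := hinvbd _ (hwx y hy θ)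
    have hpybd : ‖py‖ ≤ M := hM _ (closedBall_subset_closedBall (by linarith) (hupd_mem y hy θ))
    have hpdiff : ‖px - py‖ ≤ ((d:ℝ) * (M/ρ)) * ‖x - y‖ := by
      calc ‖px - py‖ ≤ ((d:ℝ) * (M/ρ)) * ‖Function.update x j W - Function.update y j W‖ :=
            telescoping_lip hf hs0 hρ hsδ hM (hupd_mem x hx θ) (hupd_mem y hy θ)
        _ ≤ ((d:ℝ) * (M/ρ)) * ‖x - y‖ := by
            apply mul_le_mul_of_nonneg_left (norm_update_sub_update j W x y) (by positivity)
    have hqdiff : ‖qx - qy‖ ≤ (2/ρ)^2 * ‖x - y‖ := by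
      have h1 : circleMap c ρ θ - x j ≠ 0 := hwxne x hx θ
      have h2 : circleMap c ρ θ - y j ≠ 0 := hwxne y hy θ
      have heq : qx - qy = (qx * qy) * (x j - y j) := by
        rw [hqxd, hqyd]
        field_simp
        rw [div_sub_div _ _ (show W - x j ≠ 0 from h1) (show W - y j ≠ 0 from h2)]
        ring
      rw [heq]
      calc ‖qx * qy * (x j - y j)‖ = ‖qx‖ * ‖qy‖ * ‖x j - y j‖ := by
            rw [norm_mul, norm_mul]
        _ ≤ (2/ρ) * (2/ρ) * ‖x - y‖ := by
            gcongr
            exact norm_le_pi_norm (x - y) j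
        _ = (2/ρ)^2 * ‖x - y‖ := by ring
    have hfactor : Fint x θ - Fint y θ
        = (circleMap 0 ρ θ * Complex.I) * (W - c)⁻¹ * (qx * px - qy * py) := by
      simp only [hFint, hW, hqxd, hqyd, hpxd, hpyd]
      ring
    have hDabs : ‖circleMap 0 ρ θ * Complex.I‖ = ρ := by
      rw [norm_mul, norm_circleMap_zero,
        Complex.norm_I, abs_of_pos hρ, mul_one]
    have hmabs : ‖(W - c)⁻¹‖ = ρ⁻¹ := by
      rw [norm_inv, habsw θ]
    have hsplit : ‖qx * px - qy * py‖ ≤ ‖qx‖ * ‖px - py‖ + ‖qx - qy‖ * ‖py‖ := by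
      calc ‖qx * px - qy * py‖ = ‖qx * (px - py) + (qx - qy) * py‖ := by ring_nf
        _ ≤ ‖qx * (px - py)‖ + ‖(qx - qy) * py‖ := norm_add_le _ _
        _ = ‖qx‖ * ‖px - py‖ + ‖qx - qy‖ * ‖py‖ := by rw [norm_mul, norm_mul]
    rw [dist_eq_norm, dist_eq_norm, hfactor]
    calc ‖circleMap 0 ρ θ * Complex.I * (W - c)⁻¹ * (qx * px - qy * py)‖
        = ρ * ρ⁻¹ * ‖qx * px - qy * py‖ := by
          rw [norm_mul, norm_mul, hDabs, hmabs]
      _ = ‖qx * px - qy * py‖ := by field_simp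
      _ ≤ ‖qx‖ * ‖px - py‖ + ‖qx - qy‖ * ‖py‖ := hsplit
      _ ≤ (2/ρ) * (((d:ℝ) * (M/ρ)) * ‖x - y‖) + ((2/ρ)^2 * ‖x - y‖) * M := by
          apply add_le_add
          · exact mul_le_mul hqxbd hpdiff (norm_nonneg _) (by positivity)
          · exact mul_le_mul hqdiff hpybd (norm_nonneg _) (by positivity)
      _ = K₀ * ‖x - y‖ := by rw [hK₀]; ring
  -- pointwise differentiability in the parameter
  have h_deriv : ∀ θ : ℝ, HasFDerivAt (fun x => Fint x θ) (F' θ) a := by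
    intro θ
    set W := circleMap c ρ θ with hW
    have hWne : W - a j ≠ 0 := hwxne a haball θ
    have hq : HasDerivAt (fun u : ℂ => (W - u)⁻¹) (((W - a j)^2)⁻¹) (a j) := by
      have h0 : HasDerivAt (fun u : ℂ => W - u) (-1) (a j) := (hasDerivAt_id (a j)).const_sub W
      have h1 := h0.inv hWne
      exact h1.congr_deriv (by simp)
    have hpj : HasFDerivAt (fun x : Fin d → ℂ => x j) pr a := pr.hasFDerivAt
    have hq' : HasFDerivAt (fun x : Fin d → ℂ => (W - x j)⁻¹) ((((W - a j)^2)⁻¹) • pr) a :=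
      by have := hq.comp_hasFDerivAt a hpj; exact this
    have hfd : DifferentiableAt ℂ f (Function.update a j W) :=
      hf.differentiableAt ((isOpen_polydisc d).mem_nhds
        (closedBallPi_subset_polydisc hs0 (by linarith) (hupd_mem a haball θ)))
    have h3 : HasFDerivAt (fun x : Fin d → ℂ => f (Function.update x j W)) (B θ) a :=
      hfd.hasFDerivAt.comp a (hasFDerivAt_update_left j W a)
    have h4 : HasFDerivAt (fun x : Fin d → ℂ => (W - c)⁻¹ * f (Function.update x j W))
        ((W - c)⁻¹ • B θ) a := h3.const_mul _
    have h5 := hq'.mul h4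
    have h6 := h5.const_mul (circleMap 0 ρ θ * Complex.I)
    refine h6.congr_fderiv ?_
    ext v
    simp only [hF', ContinuousLinearMap.add_apply, ContinuousLinearMap.smul_apply,
      ContinuousLinearMap.coe_smul', Pi.smul_apply, smul_eq_mul]
    ring
  -- measurability of F'
  have hcompcont : Continuous (fun T : (Fin d → ℂ) →L[ℂ] ℂ => T.comp (updCLM d j)) :=
    ((ContinuousLinearMap.compL ℂ (Fin d → ℂ) (Fin d → ℂ) ℂ).flip (updCLM d j)).continuous
  have hBmeas : AEStronglyMeasurable B (volume.restrict (Set.uIoc (0:ℝ) (2*Real.pi))) := by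
    have h1 : Measurable (fun θ => fderiv ℂ f (Function.update a j (circleMap c ρ θ))) :=
      (measurable_fderiv ℂ f).comp
        (continuous_updateFn a j (continuous_circleMap c ρ)).measurable
    exact (hcompcont.measurable.comp h1).aestronglyMeasurable
  have hsc1 : Continuous (fun θ : ℝ =>
      circleMap 0 ρ θ * Complex.I * ((circleMap c ρ θ - a j)⁻¹ * (circleMap c ρ θ - c)⁻¹)) := by
    apply Continuous.mul
    · exact (continuous_circleMap 0 ρ).mul continuous_const
    apply Continuous.mul
    · exact Continuous.inv₀ ((continuous_circleMap c ρ).sub continuous_const)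
        (fun θ => hwxne a haball θ)
    · exact Continuous.inv₀ ((continuous_circleMap c ρ).sub continuous_const)
        (fun θ => hwne θ)
  have hsc2 : Continuous (fun θ : ℝ =>
      circleMap 0 ρ θ * Complex.I * (((circleMap c ρ θ - a j)^2)⁻¹ *
        ((circleMap c ρ θ - c)⁻¹ * f (Function.update a j (circleMap c ρ θ))))) := by
    apply Continuous.mul
    · exact (continuous_circleMap 0 ρ).mul continuous_const
    apply Continuous.mul
    · exact Continuous.inv₀ (((continuous_circleMap c ρ).sub continuous_const).pow 2)
        (fun θ => pow_ne_zero 2 (hwxne a haball θ))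
    apply Continuous.mul
    · exact Continuous.inv₀ ((continuous_circleMap c ρ).sub continuous_const)
        (fun θ => hwne θ)
    · exact hcont_f a haball
  have hF'meas : AEStronglyMeasurable F' (volume.restrict (Set.uIoc (0:ℝ) (2*Real.pi))) := by
    apply AEStronglyMeasurable.add
    · exact AEStronglyMeasurable.smul hsc1.aestronglyMeasurable hBmeas
    · exact AEStronglyMeasurable.smul hsc2.aestronglyMeasurable aestronglyMeasurable_const
  -- apply the parametric differentiation theorem
  have main := intervalIntegral.hasFDerivAt_integral_of_dominated_loc_of_lip
    (F := Fint) (F' := F') (x₀ := a) (a := (0:ℝ)) (b := 2*Real.pi) (μ := volume)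
    (bound := fun _ => K₀) (s := ball a ε) (ball_mem_nhds a hε)
    (Filter.eventually_of_mem (ball_mem_nhds a hε)
      (fun x hx => (hcont_Fint x hx).aestronglyMeasurable))
    ((hcont_Fint a haball).intervalIntegrable 0 (2*Real.pi))
    hF'meas
    (Filter.Eventually.of_forall (fun θ _ => by
      apply LipschitzOnWith.of_dist_le_mul
      intro x hx y hy
      rw [Real.coe_nnabs, _root_.abs_of_nonneg hK₀0]
      exact h_lip_all θ x hx y hy))
    intervalIntegrable_const
    (Filter.Eventually.of_forall (fun θ _ => h_deriv θ))
  -- conclude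
  have hΨ : DifferentiableAt ℂ
      (fun x => (2 * Real.pi * Complex.I : ℂ)⁻¹ * ∫ θ in (0:ℝ)..2*Real.pi, Fint x θ) a :=
    (main.2.differentiableAt).const_mul _
  have heq : (fun z => dslope (fun u => f (Function.update z j u)) c (z j))
      =ᶠ[nhds a] (fun x => (2 * Real.pi * Complex.I : ℂ)⁻¹ * ∫ θ in (0:ℝ)..2*Real.pi, Fint x θ) :=
    Filter.eventually_of_mem (ball_mem_nhds a hε) (fun x hx => key x hx)
  exact heq.differentiableAt_iff.mpr hΨ


lemma g_eq {d : ℕ} (j : Fin d) {f : (Fin d → ℂ) → ℂ} {c : ℂ} (hc : ‖c‖ < 1)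
    (hvan : ∀ z ∈ polydisc d, z j = c → f z = 0) :
    ∀ z ∈ polydisc d, f z = (z j - c) * dslope (fun w => f (Function.update z j w)) c (z j) := by
  intro z hz
  rcases eq_or_ne (z j) c with h | h
  · rw [h, sub_self, zero_mul]
    exact hvan z hz h
  · rw [dslope_of_ne _ h, slope_def_field]
    have h0 : f (Function.update z j c) = 0 :=
      hvan _ (update_mem_polydisc hz hc) (Function.update_self _ _ _)
    rw [Function.update_eq_self, h0, sub_zero]
    field_simp [sub_ne_zero.2 h]

lemma g_diffOn {d : ℕ} (j : Fin d) {f : (Fin d → ℂ) → ℂ}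
    (hf : DifferentiableOn ℂ f (polydisc d)) {c : ℂ} (hc : ‖c‖ < 1)
    (hvan : ∀ z ∈ polydisc d, z j = c → f z = 0) :
    DifferentiableOn ℂ (fun z => dslope (fun w => f (Function.update z j w)) c (z j))
      (polydisc d) := by
  intro z hz
  rcases eq_or_ne (z j) c with h | h
  · exact (diffAt_core j hf hvan hz h).differentiableWithinAt
  · apply DifferentiableAt.differentiableWithinAt
    have hV : IsOpen (polydisc d ∩ {x : Fin d → ℂ | x j ≠ c}) :=
      (isOpen_polydisc d).inter (isOpen_compl_singleton.preimage (continuous_apply j))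
    have hzV : z ∈ polydisc d ∩ {x : Fin d → ℂ | x j ≠ c} := ⟨hz, h⟩
    have heq : (fun x : Fin d → ℂ => (x j - c)⁻¹ * f x)
        =ᶠ[nhds z] (fun x => dslope (fun w => f (Function.update x j w)) c (x j)) := by
      apply Filter.eventually_of_mem (hV.mem_nhds hzV)
      intro x hx
      show (x j - c)⁻¹ * f x = dslope (fun w => f (Function.update x j w)) c (x j)
      rw [dslope_of_ne _ hx.2, slope_def_field]
      have h0 : f (Function.update x j c) = 0 :=
        hvan _ (update_mem_polydisc hx.1 hc) (Function.update_self _ _ _)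
      rw [Function.update_eq_self, h0, sub_zero, div_eq_inv_mul]
    apply heq.differentiableAt_iff.mp
    have h1 : DifferentiableAt ℂ (fun x : Fin d → ℂ => x j - c) z := by
      have h2 : DifferentiableAt ℂ (fun x : Fin d → ℂ => x j) z :=
        (ContinuousLinearMap.proj (R := ℂ) (φ := fun _ : Fin d => ℂ) j).differentiableAt
      exact h2.sub_const c
    exact (h1.inv (sub_ne_zero.2 h)).mul (hf.differentiableAt ((isOpen_polydisc d).mem_nhds hz))

lemma mT_prob : IsProbabilityMeasure mT := by
  constructor
  rw [mT, Measure.smul_apply, Measure.restrict_apply MeasurableSet.univ, Set.univ_inter,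
    Real.volume_Ioc, sub_zero, smul_eq_mul]
  exact ENNReal.inv_mul_cancel (ENNReal.ofReal_pos.2 Real.two_pi_pos).ne' ENNReal.ofReal_ne_top

lemma g_norm_bound {d : ℕ} (j : Fin d) {f g : (Fin d → ℂ) → ℂ}
    (hg : DifferentiableOn ℂ g (polydisc d)) {c : ℂ} (hc : ‖c‖ < 1)
    (hfg : ∀ z ∈ polydisc d, f z = (z j - c) * g z)
    (hfin : H2polyNorm2 d f < ⊤) : H2polyNorm2 d g < ⊤ := by
  haveI : IsProbabilityMeasure mT := mT_prob
  set r₀ : ℝ := (1 + ‖c‖) / 2 with hr₀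
  have hr₀1 : r₀ < 1 := by rw [hr₀]; linarith
  have hr₀c : ‖c‖ < r₀ := by rw [hr₀]; linarith
  have hr₀0 : 0 ≤ r₀ := by positivity
  obtain ⟨C, hC⟩ := (isCompact_closedBall (0 : Fin d → ℂ) r₀).exists_bound_of_continuousOn
    (hg.continuousOn.mono (closedBallPi_subset_polydisc hr₀0 hr₀1))
  set C' : ℝ := max C 0 with hC'
  have hC'0 : 0 ≤ C' := le_max_right _ _
  set α : ℝ := r₀ - ‖c‖ with hα
  have hα0 : 0 < α := by rw [hα]; linarith
  set B : ℝ≥0∞ := max (ENNReal.ofReal (C' ^ 2))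
    (ENNReal.ofReal ((α ^ 2)⁻¹) * H2polyNorm2 d f) with hB
  have hBlt : B < ⊤ :=
    max_lt ENNReal.ofReal_lt_top (ENNReal.mul_lt_top ENNReal.ofReal_lt_top hfin)
  refine lt_of_le_of_lt ?_ hBlt
  rw [H2polyNorm2]
  apply iSup₂_le
  intro r hr
  obtain ⟨hr0, hr1⟩ := hr
  have habs_z : ∀ (θ : Fin d → ℝ) (i : Fin d),
      ‖((r : ℂ) * Complex.exp ((θ i : ℂ) * Complex.I))‖ = r := by
    intro θ i
    rw [norm_mul, Complex.norm_exp]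
    simp [abs_of_pos hr0]
  have hz_poly : ∀ θ : Fin d → ℝ,
      (fun i => (r:ℂ) * Complex.exp ((θ i : ℂ) * Complex.I)) ∈ polydisc d := by
    intro θ i
    rw [habs_z]; exact hr1
  by_cases hcase : r ≤ r₀
  · refine le_trans ?_ (le_max_left _ _)
    have hpt : ∀ θ : Fin d → ℝ,
        ENNReal.ofReal (‖(g (fun i => (r:ℂ) * Complex.exp ((θ i : ℂ) * Complex.I)))‖ ^ 2)
          ≤ ENNReal.ofReal (C' ^ 2) := by
      intro θ
      apply ENNReal.ofReal_le_ofReal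
      have h1 : ‖g (fun i => (r:ℂ) * Complex.exp ((θ i : ℂ) * Complex.I))‖ ≤ C := by
        apply hC
        rw [mem_closedBallPi hr₀0]
        intro i
        rw [habs_z]; exact hcase
      have h2 : ‖(g (fun i => (r:ℂ) * Complex.exp ((θ i : ℂ) * Complex.I)))‖ ≤ C' :=
        le_trans h1 (le_max_left _ _)
      exact pow_le_pow_left₀ (norm_nonneg _) h2 2
    calc ∫⁻ θ : Fin d → ℝ, ENNReal.ofReal
          (‖(g (fun i => (r:ℂ) * Complex.exp ((θ i : ℂ) * Complex.I)))‖ ^ 2)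
            ∂(Measure.pi fun _ : Fin d => mT)
        ≤ ∫⁻ _θ : Fin d → ℝ, ENNReal.ofReal (C' ^ 2) ∂(Measure.pi fun _ : Fin d => mT) :=
          lintegral_mono hpt
      _ = ENNReal.ofReal (C' ^ 2) := by rw [lintegral_const, measure_univ, mul_one]
  · push_neg at hcase
    refine le_trans ?_ (le_max_right _ _)
    have hpt : ∀ θ : Fin d → ℝ,
        ENNReal.ofReal (‖(g (fun i => (r:ℂ) * Complex.exp ((θ i : ℂ) * Complex.I)))‖ ^ 2)
          ≤ ENNReal.ofReal ((α ^ 2)⁻¹) * ENNReal.ofReal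
            (‖(f (fun i => (r:ℂ) * Complex.exp ((θ i : ℂ) * Complex.I)))‖ ^ 2) := by
      intro θ
      rw [← ENNReal.ofReal_mul (by positivity)]
      apply ENNReal.ofReal_le_ofReal
      set z : Fin d → ℂ := fun i => (r:ℂ) * Complex.exp ((θ i : ℂ) * Complex.I) with hzdef
      have hlow : α ≤ ‖(z j - c)‖ := by
        have h1 : ‖(z j)‖ - ‖c‖ ≤ ‖(z j - c)‖ := by
          have := norm_sub_norm_le (z j) c
          simpa using this
        have h2 : ‖(z j)‖ = r := habs_z θ j
        rw [h2] at h1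
        rw [hα]; linarith
      have hgle : α * ‖(g z)‖ ≤ ‖(f z)‖ := by
        rw [hfg _ (hz_poly θ), norm_mul]
        exact mul_le_mul_of_nonneg_right hlow (norm_nonneg _)
      have hsq : α ^ 2 * ‖(g z)‖ ^ 2 ≤ ‖(f z)‖ ^ 2 := by
        have h3 := mul_le_mul hgle hgle (by positivity) (norm_nonneg (f z))
        nlinarith [h3]
      rw [le_inv_mul_iff₀ (by positivity : (0:ℝ) < α ^ 2)]
      exact hsq
    calc ∫⁻ θ : Fin d → ℝ, ENNReal.ofReal
          (‖(g (fun i => (r:ℂ) * Complex.exp ((θ i : ℂ) * Complex.I)))‖ ^ 2)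
            ∂(Measure.pi fun _ : Fin d => mT)
        ≤ ∫⁻ θ : Fin d → ℝ, ENNReal.ofReal ((α ^ 2)⁻¹) * ENNReal.ofReal
            (‖(f (fun i => (r:ℂ) * Complex.exp ((θ i : ℂ) * Complex.I)))‖ ^ 2)
              ∂(Measure.pi fun _ : Fin d => mT) := lintegral_mono hpt
      _ = ENNReal.ofReal ((α ^ 2)⁻¹) * ∫⁻ θ : Fin d → ℝ, ENNReal.ofReal
            (‖(f (fun i => (r:ℂ) * Complex.exp ((θ i : ℂ) * Complex.I)))‖ ^ 2)
              ∂(Measure.pi fun _ : Fin d => mT) :=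
          lintegral_const_mul' _ _ ENNReal.ofReal_ne_top
      _ ≤ ENNReal.ofReal ((α ^ 2)⁻¹) * H2polyNorm2 d f := by
          apply mul_le_mul_right
          rw [H2polyNorm2]
          exact le_biSup
            (fun r : ℝ => ∫⁻ θ : Fin d → ℝ, ENNReal.ofReal
              (‖(f (fun i => (r:ℂ) * Complex.exp ((θ i : ℂ) * Complex.I)))‖ ^ 2)
                ∂(Measure.pi fun _ : Fin d => mT))
            (⟨hr0, hr1⟩ : r ∈ Set.Ioo (0:ℝ) 1)

end DivisionAux

/-- The division property of `H²(𝔻^d)`: if `f ∈ H²(𝔻^d)` vanishes on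
`{z ∈ 𝔻^d : z_j = λ_j}`, then `f = (z_j − λ_j) g` for some `g ∈ H²(𝔻^d)`. -/
theorem stmt13 (d : ℕ) (hd : 1 ≤ d) (lam : Fin d → ℂ) (hlam : lam ∈ polydisc d)
    (j : Fin d) (f : (Fin d → ℂ) → ℂ) (hf : MemH2poly d f)
    (hvan : ∀ z ∈ polydisc d, z j = lam j → f z = 0) :
    ∃ g : (Fin d → ℂ) → ℂ, MemH2poly d g ∧
      ∀ z ∈ polydisc d, f z = (z j - lam j) * g z := by
  obtain ⟨hfd, hffin⟩ := hf
  have hcabs : ‖(lam j)‖ < 1 := hlam j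
  have hgd := g_diffOn j hfd hcabs hvan
  have hid := g_eq j hcabs hvan
  exact ⟨_, ⟨hgd, g_norm_bound j hgd hcabs hid hffin⟩, hid⟩
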